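/- Let n, D, T be positive integers, let Â be an n×n real matrix, and let g_1, …, g_T : (Fin D → ℝ) → (Fin D → ℝ) be everywhere differentiable maps. Given an input matrix X : Matrix (Fin n) (Fin D) ℝ, define recursively X^(0) = X and, for j = 1,…,T, X̃^(j) = Â * X^(j−1) and X^(j) i = g_j (X̃^(j) i) for each row i. Let F_j be the map X' ↦ (i ↦ g_j ((Â * X') i)) and let F = F_T ∘ F_{T−1} ∘ ⋯ ∘ F_1. Then F is differentiable at X and |det (fderiv ℝ F X)| = |det Â|^{T·D} · ∏_{j=1}^{T} ∏_{i : Fin n} |det (fderiv ℝ g_j (X̃^(j) i))|. -/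

import Mathlib

attribute [local instance] Matrix.normedAddCommGroup Matrix.normedSpace

/-- `iterFlow Ahat g j h X` is `(F_j ∘ F_{j-1} ∘ ⋯ ∘ F_1) X`, where the `k`-th constituent
flow `F_k` maps `X'` to the matrix whose `i`-th row is `g_k ((Ahat * X') i)`.  In particular
`iterFlow Ahat g 0 _ X = X` (so `X^(0) = X`) and
`iterFlow Ahat g (j+1) _ X = F_{j+1} (iterFlow Ahat g j _ X)`, i.e. `X^(j+1) i = g_{j+1} (X̃^(j+1) i)`
with `X̃^(j+1) = Ahat * X^(j)`. -/
def iterFlow {n D T : ℕ} (Ahat : Matrix (Fin n) (Fin n) ℝ)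
    (g : Fin T → (Fin D → ℝ) → (Fin D → ℝ)) :
    (j : ℕ) → j ≤ T → Matrix (Fin n) (Fin D) ℝ → Matrix (Fin n) (Fin D) ℝ
  | 0, _, X => X
  | j + 1, h, X => Matrix.of fun i => g ⟨j, h⟩ ((Ahat * iterFlow Ahat g j (Nat.le_of_succ_le h) X) i)


noncomputable section

variable {n D : ℕ}

/-- Left multiplication by `A` as a linear map on `Fin n → Fin D → ℝ` (defeq to matrices). -/
def mulLin (A : Matrix (Fin n) (Fin n) ℝ) :
    (Fin n → Fin D → ℝ) →ₗ[ℝ] (Fin n → Fin D → ℝ) where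
  toFun X := A * Matrix.of X
  map_add' X Y := Matrix.mul_add A (Matrix.of X) (Matrix.of Y)
  map_smul' c X := Matrix.mul_smul A c (Matrix.of X)

lemma det_mulLin (A : Matrix (Fin n) (Fin n) ℝ) :
    LinearMap.det (mulLin (D := D) A) = A.det ^ D := by
  classical
  rw [← LinearMap.det_toMatrix (Pi.basis fun _ : Fin n => Pi.basisFun ℝ (Fin D))]
  have : LinearMap.toMatrix (Pi.basis fun _ : Fin n => Pi.basisFun ℝ (Fin D))
        (Pi.basis fun _ : Fin n => Pi.basisFun ℝ (Fin D)) (mulLin A) =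
      (Matrix.blockDiagonal fun _ : Fin D => A).submatrix
        (Equiv.sigmaEquivProd (Fin n) (Fin D)) (Equiv.sigmaEquivProd (Fin n) (Fin D)) := by
    ext ⟨i, d⟩ ⟨i', d'⟩
    rw [LinearMap.toMatrix_apply, Pi.basis_repr, Pi.basis_apply]
    simp only [Matrix.submatrix_apply, Equiv.sigmaEquivProd_apply, Matrix.blockDiagonal_apply,
      Pi.basisFun_repr]
    show (A * Matrix.of (Pi.single i' (Pi.basisFun ℝ (Fin D) d'))) i d = _
    simp only [Matrix.mul_apply, Matrix.of_apply, Pi.single_apply, Pi.basisFun_apply]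
    by_cases h : d' = d
    · subst h
      simp [Pi.single_apply, ite_apply, ite_mul, mul_ite]
    · simp [Pi.single_apply, ite_apply, ite_mul, mul_ite, h, Ne.symm h]
  rw [this, Matrix.det_submatrix_equiv_self, Matrix.det_blockDiagonal]
  simp

lemma det_piMap (f : Fin n → ((Fin D → ℝ) →ₗ[ℝ] (Fin D → ℝ))) :
    LinearMap.det
        (LinearMap.pi (fun i => (f i).comp (LinearMap.proj i)) :
          (Fin n → Fin D → ℝ) →ₗ[ℝ] (Fin n → Fin D → ℝ)) =
      ∏ i, LinearMap.det (f i) := by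
  classical
  rw [← LinearMap.det_toMatrix (Pi.basis fun _ : Fin n => Pi.basisFun ℝ (Fin D))]
  have : LinearMap.toMatrix (Pi.basis fun _ : Fin n => Pi.basisFun ℝ (Fin D))
        (Pi.basis fun _ : Fin n => Pi.basisFun ℝ (Fin D))
        (LinearMap.pi fun i => (f i).comp (LinearMap.proj i)) =
      (Matrix.blockDiagonal fun i : Fin n =>
          LinearMap.toMatrix (Pi.basisFun ℝ (Fin D)) (Pi.basisFun ℝ (Fin D)) (f i)).submatrix
        ((Equiv.sigmaEquivProd (Fin n) (Fin D)).trans (Equiv.prodComm _ _))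
        ((Equiv.sigmaEquivProd (Fin n) (Fin D)).trans (Equiv.prodComm _ _)) := by
    ext ⟨i, d⟩ ⟨i', d'⟩
    rw [LinearMap.toMatrix_apply, Pi.basis_repr, Pi.basis_apply]
    simp only [Matrix.submatrix_apply, Equiv.trans_apply, Equiv.sigmaEquivProd_apply,
      Equiv.prodComm_apply, Prod.swap_prod_mk, Matrix.blockDiagonal_apply,
      LinearMap.pi_apply, LinearMap.comp_apply, LinearMap.proj_apply, Pi.basisFun_repr]
    by_cases h : i = i'
    · subst h
      simp [LinearMap.toMatrix_apply, Pi.basisFun_repr]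
    · simp [Pi.single_apply, h, Ne.symm h]
  rw [this, Matrix.det_submatrix_equiv_self, Matrix.det_blockDiagonal]
  simp [LinearMap.det_toMatrix]

variable {n D : ℕ}

def mulCLM (A : Matrix (Fin n) (Fin n) ℝ) :
    (Fin n → Fin D → ℝ) →L[ℝ] (Fin n → Fin D → ℝ) :=
  LinearMap.toContinuousLinearMap (mulLin A)

def stepCLM (A : Matrix (Fin n) (Fin n) ℝ) (gj : (Fin D → ℝ) → Fin D → ℝ)
    (Y : Fin n → Fin D → ℝ) :
    (Fin n → Fin D → ℝ) →L[ℝ] (Fin n → Fin D → ℝ) :=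
  (ContinuousLinearMap.pi fun i =>
    (fderiv ℝ gj ((A * Matrix.of Y) i)).comp (ContinuousLinearMap.proj i)).comp (mulCLM A)

lemma step_hasFDerivAt (A : Matrix (Fin n) (Fin n) ℝ) (gj : (Fin D → ℝ) → Fin D → ℝ)
    (hgj : Differentiable ℝ gj) (Y : Fin n → Fin D → ℝ) :
    HasFDerivAt (fun X' : Fin n → Fin D → ℝ => fun i => gj ((A * Matrix.of X') i))
      (stepCLM A gj Y) Y := by
  have h1 : HasFDerivAt (fun Y' : Fin n → Fin D → ℝ => fun i => gj (Y' i))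
      (ContinuousLinearMap.pi fun i =>
        (fderiv ℝ gj ((A * Matrix.of Y) i)).comp (ContinuousLinearMap.proj i))
      (mulCLM A Y) := by
    refine hasFDerivAt_pi.2 fun i => ?_
    exact ((hgj _).hasFDerivAt).comp _ (hasFDerivAt_apply i _)
  exact h1.comp Y (mulCLM A).hasFDerivAt

lemma step_det (A : Matrix (Fin n) (Fin n) ℝ) (gj : (Fin D → ℝ) → Fin D → ℝ)
    (Y : Fin n → Fin D → ℝ) :
    LinearMap.det (stepCLM A gj Y).toLinearMap =
      (∏ i, LinearMap.det (fderiv ℝ gj ((A * Matrix.of Y) i)).toLinearMap) * A.det ^ D := by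
  refine (congrArg LinearMap.det (show (stepCLM A gj Y).toLinearMap =
    (ContinuousLinearMap.pi fun i =>
      (fderiv ℝ gj ((A * Matrix.of Y) i)).comp (ContinuousLinearMap.proj i)).toLinearMap ∘ₗ
        (mulCLM (D := D) A).toLinearMap from rfl)).trans ?_
  rw [LinearMap.det_comp]
  congr 1
  · exact det_piMap fun i => (fderiv ℝ gj ((A * Matrix.of Y) i)).toLinearMap
  · rw [show ((mulCLM (D := D) A).toLinearMap) = mulLin A from
      LinearMap.coe_toContinuousLinearMap _, det_mulLin]

end


/-- For the composite flow `F = F_T ∘ F_{T-1} ∘ ⋯ ∘ F_1` with everywhere differentiable row maps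
`g_1, …, g_T` and a common graph convolution matrix `Ahat`, `F` is differentiable at `X` and
`|det (fderiv ℝ F X)| = |det Ahat|^(T·D) * ∏_{j=1}^T ∏_{i} |det (fderiv ℝ g_j (X̃^(j) i))|`,
where `X̃^(j) = Ahat * X^(j-1)`. -/
theorem gcflow_full_det (n D T : ℕ) (hn : 0 < n) (hD : 0 < D) (hT : 0 < T)
    (Ahat : Matrix (Fin n) (Fin n) ℝ)
    (g : Fin T → (Fin D → ℝ) → (Fin D → ℝ))
    (hg : ∀ j : Fin T, Differentiable ℝ (g j))
    (X : Matrix (Fin n) (Fin D) ℝ) :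
    DifferentiableAt ℝ (iterFlow Ahat g T le_rfl) X ∧
      |LinearMap.det (fderiv ℝ (iterFlow Ahat g T le_rfl) X).toLinearMap| =
        |Ahat.det| ^ (T * D) *
          ∏ j : Fin T, ∏ i : Fin n,
            |LinearMap.det
              (fderiv ℝ (g j)
                ((Ahat * iterFlow Ahat g j.val (Nat.le_of_lt j.isLt) X) i)).toLinearMap| := by
  classical
  have key : ∀ (j : ℕ) (h : j ≤ T),
      DifferentiableAt ℝ (iterFlow Ahat g j h) X ∧
        |LinearMap.det (fderiv ℝ (iterFlow Ahat g j h) X).toLinearMap| =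
          |Ahat.det| ^ (j * D) *
            ∏ k : Fin j, ∏ i : Fin n,
              |LinearMap.det
                (fderiv ℝ (g (Fin.castLE h k))
                  ((Ahat * iterFlow Ahat g k.val (le_trans (le_of_lt k.isLt) h) X) i)).toLinearMap| := by
    intro j
    induction j with
    | zero =>
      intro h
      refine ⟨differentiableAt_id, ?_⟩
      have hid : fderiv ℝ (iterFlow Ahat g 0 h) X = ContinuousLinearMap.id ℝ _ := fderiv_id'
      rw [hid]
      simp
    | succ j ih =>
      intro h
      have hj : j ≤ T := Nat.le_of_succ_le h
      obtain ⟨hd, he⟩ := ih hj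
      have hstep := step_hasFDerivAt Ahat (g ⟨j, h⟩) (hg _) (iterFlow Ahat g j hj X)
      have hcomp : HasFDerivAt (iterFlow Ahat g (j + 1) h)
          ((stepCLM Ahat (g ⟨j, h⟩) (iterFlow Ahat g j hj X)).comp
            (fderiv ℝ (iterFlow Ahat g j hj) X)) X :=
        hstep.comp X hd.hasFDerivAt
      refine ⟨hcomp.differentiableAt, ?_⟩
      have hsd : |LinearMap.det (stepCLM Ahat (g ⟨j, h⟩) (iterFlow Ahat g j hj X)).toLinearMap| =
          (∏ i : Fin n,
            |LinearMap.det (fderiv ℝ (g ⟨j, h⟩)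
              ((Ahat * Matrix.of (iterFlow Ahat g j hj X)) i)).toLinearMap|) *
            |Ahat.det| ^ D := by
        exact (congrArg abs (step_det _ _ _)).trans (by rw [abs_mul, Finset.abs_prod, abs_pow])
      have hdet : |LinearMap.det (fderiv ℝ (iterFlow Ahat g (j + 1) h) X).toLinearMap| =
          |LinearMap.det (stepCLM Ahat (g ⟨j, h⟩) (iterFlow Ahat g j hj X)).toLinearMap| *
            |LinearMap.det (fderiv ℝ (iterFlow Ahat g j hj) X).toLinearMap| := by
        haveI : ContinuousSMul ℝ (Matrix (Fin n) (Fin D) ℝ) := IsBoundedSMul.continuousSMul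
        haveI : ContinuousSMul ℝ (Matrix (Fin n) (Fin D) ℝ) :=
          (inferInstance : ContinuousSMul ℝ (Fin n → Fin D → ℝ))
        have hf : fderiv ℝ (iterFlow Ahat g (j + 1) h) X =
            (stepCLM Ahat (g ⟨j, h⟩) (iterFlow Ahat g j hj X)).comp
              (fderiv ℝ (iterFlow Ahat g j hj) X) :=
          @HasFDerivAt.fderiv _ _ _ _ _ _ _ _ _ _ _ _ _ _ (by assumption) _ (by assumption) _ hcomp
        rw [hf]
        exact (congrArg abs (LinearMap.det_comp
          (stepCLM Ahat (g ⟨j, h⟩) (iterFlow Ahat g j hj X)).toLinearMap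
          (fderiv ℝ (iterFlow Ahat g j hj) X).toLinearMap)).trans (abs_mul _ _)
      rw [hdet, hsd, he]
      have hsplit : (∏ k : Fin (j + 1), ∏ i : Fin n,
            |LinearMap.det
              (fderiv ℝ (g (Fin.castLE h k))
                ((Ahat * iterFlow Ahat g k.val (le_trans (le_of_lt k.isLt) h) X) i)).toLinearMap|) =
          (∏ k : Fin j, ∏ i : Fin n,
            |LinearMap.det
              (fderiv ℝ (g (Fin.castLE hj k))
                ((Ahat * iterFlow Ahat g k.val (le_trans (le_of_lt k.isLt) hj) X) i)).toLinearMap|) *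
          ∏ i : Fin n,
            |LinearMap.det
              (fderiv ℝ (g ⟨j, h⟩)
                ((Ahat * Matrix.of (iterFlow Ahat g j hj X)) i)).toLinearMap| := by
        rw [Fin.prod_univ_castSucc]
        rfl
      rw [hsplit, Nat.succ_mul, pow_add]
      ring
  have := key T le_rfl
  exact this
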